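/- Fix an execution of the Eneström–Phragmén procedure and a subset J of candidates. Let p = min{s : w_*[s] ≤ q} (which satisfies p ≤ n), and for s ≤ p let p_{J*}(s) denote the number of seats allocated to members of J* during steps 0,…,s−1. Then y_J[s] ≥ y_J − p_{J*}(s)·q for all s ≤ p, where y_J[s] = Σ_{k : A_k ⊇ J} v_k[s]. -/
import Mathlib


/-!
The Eneström–Phragmén procedure.

We fix a number of seats `n ≥ 1`, a finite set `ι` of candidates with capacities
`m i ∈ ℕ∞`, a finite set `κ` of vote types, and for each vote type a positive weight
`v k` and a nonempty approval set `A k`.  The total vote is `V = ∑ k, v k` and the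
(Droop) quota is `q = V / (n + 1)`.  An execution of the procedure is recorded by the
vote weights `vk s k` at each step `s`, the seat counts `seats s i`, and the candidate
`winner s` receiving seat `s + 1` (for `s < n`), subject to the rules of the procedure.
-/

namespace EP

/-- The data of an Eneström–Phragmén election. -/
structure Input (ι κ : Type*) [Fintype ι] [DecidableEq ι] [Fintype κ] : Type _ where
  /-- number of seats -/
  n : ℕ
  hn : 1 ≤ n
  /-- capacities of the candidates -/
  m : ι → ℕ∞
  /-- weights of the vote types -/
  v : κ → ℝ
  hv : ∀ k, 0 < v k
  /-- approval sets of the vote types -/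
  A : κ → Finset ι
  hA : ∀ k, (A k).Nonempty

namespace Input

variable {ι κ : Type*} [Fintype ι] [DecidableEq ι] [Fintype κ] (P : Input ι κ)

/-- Total number of votes. -/
noncomputable def V : ℝ := ∑ k, P.v k

/-- The Droop quota `q = v / (n + 1)`. -/
noncomputable def q : ℝ := P.V / (P.n + 1)

/-- Support of candidate `i` given current vote weights `u`:
`w_i = ∑_{k : i ∈ A_k} u_k`. -/
noncomputable def supp (u : κ → ℝ) (i : ι) : ℝ :=
  ∑ k ∈ Finset.univ.filter (fun k => i ∈ P.A k), u k

/-- Standing assumption: at least `n` candidates have positive initial support. -/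
def enough : Prop := P.n ≤ {i : ι | 0 < P.supp P.v i}.ncard

end Input

/-- An execution of the Eneström–Phragmén procedure: at each step `s < n`,
seat `s + 1` is given to an eligible candidate `winner s` of maximal support, and the
votes approving the winner are reduced according to the quota rule. -/
structure Exec {ι κ : Type*} [Fintype ι] [DecidableEq ι] [Fintype κ]
    (P : Input ι κ) : Type _ where
  /-- the vote weights `v_k[s]` -/
  vk : ℕ → κ → ℝ
  /-- the seat counts `n_i[s]` -/
  seats : ℕ → ι → ℕ
  /-- the candidate receiving seat `s + 1` -/
  winner : ℕ → ι
  vk_init : vk 0 = P.v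
  seats_init : ∀ i, seats 0 i = 0
  /-- the winner is eligible -/
  winner_elig : ∀ s < P.n, (seats s (winner s) : ℕ∞) < P.m (winner s)
  /-- the winner maximizes the support among eligible candidates -/
  winner_max : ∀ s < P.n, ∀ i : ι, (seats s i : ℕ∞) < P.m i →
    P.supp (vk s) i ≤ P.supp (vk s) (winner s)
  seats_succ : ∀ s < P.n, ∀ i : ι,
    seats (s + 1) i = if i = winner s then seats s i + 1 else seats s i
  /-- vote reduction when the winner has at least a quota -/
  vk_succ_ge : ∀ s < P.n, ∀ k, winner s ∈ P.A k → P.q ≤ P.supp (vk s) (winner s) →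
    vk (s + 1) k = (1 - P.q / P.supp (vk s) (winner s)) * vk s k
  /-- vote exhaustion when the winner has less than a quota -/
  vk_succ_lt : ∀ s < P.n, ∀ k, winner s ∈ P.A k → P.supp (vk s) (winner s) < P.q →
    vk (s + 1) k = 0
  /-- votes not approving the winner are unchanged -/
  vk_succ_out : ∀ s < P.n, ∀ k, winner s ∉ P.A k → vk (s + 1) k = vk s k

end EP

open EP in
/-- fix an execution and a subset `J`.  Let `p = min {s : w_*[s] ≤ q}`
(characterized by: `p ≤ n`, at every earlier step the winner's support exceeds `q`, and
at step `p` every eligible candidate has support at most `q`).  Then for all `s ≤ p`,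
`y_J[s] ≥ y_J - p_{J*}(s) · q`, where `p_{J*}(s)` is the number of seats allocated to
members of `J* = ⋃ {A_k : A_k ⊇ J}` during steps `0, …, s - 1`. -/
theorem enestrom_phragmen_yJ_lower_bound
    {ι κ : Type*} [Fintype ι] [DecidableEq ι] [Fintype κ]
    (P : Input ι κ) (henough : P.enough) (E : Exec P) (J : Finset ι)
    (p : ℕ) (hpn : p ≤ P.n)
    (hmin : ∀ s < p, P.q < P.supp (E.vk s) (E.winner s))
    (hp : ∀ i : ι, (E.seats p i : ℕ∞) < P.m i → P.supp (E.vk p) i ≤ P.q) :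
    ∀ s ≤ p,
      (∑ k ∈ Finset.univ.filter (fun k => J ⊆ P.A k), P.v k) -
        (((Finset.range s).filter
            (fun t => ∃ k, J ⊆ P.A k ∧ E.winner t ∈ P.A k)).card : ℝ) * P.q
      ≤ ∑ k ∈ Finset.univ.filter (fun k => J ⊆ P.A k), E.vk s k := by
  classical
  have hV0 : 0 ≤ P.V := Finset.sum_nonneg fun k _ => (P.hv k).le
  have hq0 : 0 ≤ P.q := div_nonneg hV0 (by positivity)
  have hnonneg : ∀ t, t ≤ p → ∀ k, 0 ≤ E.vk t k := by
    intro t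
    induction t with
    | zero => intro _ k; rw [E.vk_init]; exact (P.hv k).le
    | succ t ih =>
      intro ht k
      have htp : t < p := Nat.lt_of_succ_le ht
      have htn : t < P.n := lt_of_lt_of_le htp hpn
      have hw : P.q < P.supp (E.vk t) (E.winner t) := hmin t htp
      have hw0 : 0 < P.supp (E.vk t) (E.winner t) := lt_of_le_of_lt hq0 hw
      by_cases hk : E.winner t ∈ P.A k
      · rw [E.vk_succ_ge t htn k hk hw.le]
        have h1 : P.q / P.supp (E.vk t) (E.winner t) ≤ 1 := (div_le_one hw0).2 hw.le
        have h2 := ih htp.le k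
        nlinarith
      · rw [E.vk_succ_out t htn k hk]; exact ih htp.le k
  intro s
  induction s with
  | zero => intro _; simp [E.vk_init]
  | succ s ih =>
    intro hs
    have hsp : s < p := Nat.lt_of_succ_le hs
    have hsn : s < P.n := lt_of_lt_of_le hsp hpn
    have ihs := ih hsp.le
    set S := Finset.univ.filter (fun k => J ⊆ P.A k) with hS
    by_cases hwin : ∃ k, J ⊆ P.A k ∧ E.winner s ∈ P.A k
    · have hcard : ((Finset.range (s+1)).filter
          (fun t => ∃ k, J ⊆ P.A k ∧ E.winner t ∈ P.A k)).card
          = ((Finset.range s).filter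
          (fun t => ∃ k, J ⊆ P.A k ∧ E.winner t ∈ P.A k)).card + 1 := by
        rw [Finset.range_add_one, Finset.filter_insert, if_pos hwin,
          Finset.card_insert_of_notMem (by simp)]
      have hw : P.q < P.supp (E.vk s) (E.winner s) := hmin s hsp
      have hw0 : 0 < P.supp (E.vk s) (E.winner s) := lt_of_le_of_lt hq0 hw
      set w := P.supp (E.vk s) (E.winner s) with hwdef
      set S1 := S.filter (fun k => E.winner s ∈ P.A k) with hS1
      have hsum : ∑ k ∈ S, E.vk (s+1) k
          = ∑ k ∈ S, E.vk s k - (P.q / w) * ∑ k ∈ S1, E.vk s k := by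
        rw [← Finset.sum_filter_add_sum_filter_not S
            (fun k => E.winner s ∈ P.A k) (E.vk (s+1)),
          ← Finset.sum_filter_add_sum_filter_not S
            (fun k => E.winner s ∈ P.A k) (E.vk s)]
        have h1 : ∀ k ∈ S1, E.vk (s+1) k = (1 - P.q / w) * E.vk s k := by
          intro k hk
          exact E.vk_succ_ge s hsn k (Finset.mem_filter.1 hk).2 hw.le
        have h2 : ∀ k ∈ S.filter (fun k => ¬ E.winner s ∈ P.A k),
            E.vk (s+1) k = E.vk s k := by
          intro k hk
          exact E.vk_succ_out s hsn k (Finset.mem_filter.1 hk).2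
        rw [Finset.sum_congr rfl h1, Finset.sum_congr rfl h2, ← Finset.mul_sum]
        ring
      have hsub : S1 ⊆ Finset.univ.filter (fun k => E.winner s ∈ P.A k) := by
        intro k hk
        simp only [hS1, hS, Finset.mem_filter] at hk ⊢
        exact ⟨hk.1.1, hk.2⟩
      have hle : ∑ k ∈ S1, E.vk s k ≤ w := by
        rw [hwdef, Input.supp]
        exact Finset.sum_le_sum_of_subset_of_nonneg hsub
          (fun k _ _ => hnonneg s hsp.le k)
      have hDq : (P.q / w) * ∑ k ∈ S1, E.vk s k ≤ P.q := by
        calc (P.q / w) * ∑ k ∈ S1, E.vk s k ≤ (P.q / w) * w :=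
              mul_le_mul_of_nonneg_left hle (div_nonneg hq0 hw0.le)
          _ = P.q := div_mul_cancel₀ _ hw0.ne'
      rw [hcard, hsum]
      push_cast
      linarith
    · have hcard : ((Finset.range (s+1)).filter
          (fun t => ∃ k, J ⊆ P.A k ∧ E.winner t ∈ P.A k)).card
          = ((Finset.range s).filter
          (fun t => ∃ k, J ⊆ P.A k ∧ E.winner t ∈ P.A k)).card := by
        rw [Finset.range_add_one, Finset.filter_insert, if_neg hwin]
      have hsum : ∑ k ∈ S, E.vk (s+1) k = ∑ k ∈ S, E.vk s k := by
        refine Finset.sum_congr rfl fun k hk => ?_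
        have hJk : J ⊆ P.A k := (Finset.mem_filter.1 hk).2
        have hnk : E.winner s ∉ P.A k := fun h => hwin ⟨k, hJk, h⟩
        exact E.vk_succ_out s hsn k hnk
      rw [hcard, hsum]
      exact ihs
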